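/- Let Q : X → X be an invertible linear operator with ‖Q⁻¹ − I‖ < 1 (operator norm). Then for every q ∈ X the equation (Q − I)P_K(x) + x = −q has exactly one solution x ∈ X. -/
import Mathlib

open RealInnerProductSpace Filter Topology

variable {X : Type*} [NormedAddCommGroup X] [InnerProductSpace ℝ X] [FiniteDimensional ℝ X]

/-- The Clarke generalized Jacobian of a map `F : X → X` at `x`: the convex hull of all
limits of Fréchet derivatives of `F` along sequences of differentiability points
converging to `x`. -/
def clarkeJacobian (F : X → X) (x : X) : Set (X →L[ℝ] X) :=
  convexHull ℝ {V : X →L[ℝ] X | ∃ u : ℕ → X,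
    (∀ k, DifferentiableAt ℝ F (u k)) ∧
    Tendsto u atTop (𝓝 x) ∧
    Tendsto (fun k => fderiv ℝ F (u k)) atTop (𝓝 V)}

/-- `P` is the metric projection onto `K`: `P z` belongs to `K` and is a nearest point
of `K` to `z`. -/
def IsMetricProjection (K : Set X) (P : X → X) : Prop :=
  ∀ z : X, P z ∈ K ∧ ∀ y ∈ K, ‖z - P z‖ ≤ ‖z - y‖

/-- If `Q` is invertible with `‖Q⁻¹ − I‖ < 1`, then for every `q` the projection equation
`(Q − I) (P x) + x = −q` has exactly one solution. -/
theorem quadProjEquation_existsUnique_of_inv_norm_lt_one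
    (K : Set X) (hne : K.Nonempty) (hcl : IsClosed K) (hconv : Convex ℝ K)
    (hcone : ∀ c : ℝ, 0 ≤ c → ∀ y ∈ K, c • y ∈ K)
    (P : X → X) (hP : IsMetricProjection K P)
    (Q S : X →L[ℝ] X) (hQS : Q * S = 1) (hSQ : S * Q = 1) (hS : ‖S - 1‖ < 1)
    (q : X) :
    ∃! x : X, (Q - 1) (P x) + x = -q := by
  haveI : Nonempty K := hne.to_subtype
  -- variational inequality for the projection
  have hvar : ∀ z : X, ∀ w ∈ K, ⟪z - P z, w - P z⟫ ≤ 0 := by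
    intro z
    have hinf : ‖z - P z‖ = ⨅ w : K, ‖z - w‖ := by
      refine le_antisymm (le_ciInf fun w => (hP z).2 w w.2) ?_
      exact ciInf_le ⟨0, by rintro a ⟨w, rfl⟩; exact norm_nonneg _⟩
        (⟨P z, (hP z).1⟩ : K)
    exact (norm_eq_iInf_iff_real_inner_le_zero hconv (hP z).1).mp hinf
  -- I - P is nonexpansive
  have hlipIP : LipschitzWith 1 (fun x => x - P x) := by
    refine LipschitzWith.of_dist_le_mul fun x y => ?_
    simp only [dist_eq_norm, NNReal.coe_one, one_mul]
    have h1 := hvar x (P y) (hP y).1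
    have h2 := hvar y (P x) (hP x).1
    have h1' : 0 ≤ ⟪x - P x, P x - P y⟫ := by
      have e : (P y - P x : X) = -(P x - P y) := by abel
      rw [e, inner_neg_right] at h1; linarith
    have h2' : ⟪y - P y, P x - P y⟫ ≤ 0 := h2
    have key : ‖P x - P y‖ ^ 2 ≤ ⟪x - y, P x - P y⟫ := by
      have e : ⟪(x - P x) - (y - P y), P x - P y⟫
          = ⟪x - y, P x - P y⟫ - ‖P x - P y‖ ^ 2 := by
        have e2 : ((x - P x) - (y - P y) : X) = (x - y) - (P x - P y) := by abel
        rw [e2, inner_sub_left, real_inner_self_eq_norm_sq]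
      rw [inner_sub_left] at e
      linarith
    have hxy : ((x - P x) - (y - P y) : X) = (x - y) - (P x - P y) := by abel
    rw [hxy]
    have expand := @norm_sub_sq_real X _ _ (x - y) (P x - P y)
    nlinarith [norm_nonneg ((x - y) - (P x - P y)), norm_nonneg (x - y),
      norm_nonneg (P x - P y)]
  -- the contraction
  set T : X → X := fun x => -S q - (S - 1) (x - P x) with hT
  have hSQ' : ∀ y : X, S (Q y) = y := fun y => by
    have := congrFun (congrArg DFunLike.coe hSQ) y
    simpa [ContinuousLinearMap.mul_apply] using this
  have hQS' : ∀ y : X, Q (S y) = y := fun y => by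
    have := congrFun (congrArg DFunLike.coe hQS) y
    simpa [ContinuousLinearMap.mul_apply] using this
  have hc1 : ‖S - 1‖₊ < 1 := by
    rw [← NNReal.coe_lt_coe]; simpa using hS
  have hlipT : LipschitzWith ‖S - 1‖₊ T := by
    have hg : LipschitzWith ‖S - 1‖₊ (fun x => (S - 1) (x - P x)) := by
      have := (S - 1).lipschitz.comp hlipIP
      rwa [mul_one] at this
    refine LipschitzWith.of_dist_le_mul fun x y => ?_
    calc dist (T x) (T y) = dist ((S - 1) (x - P x)) ((S - 1) (y - P y)) := by
          simp only [hT, dist_sub_left]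
      _ ≤ ‖S - 1‖₊ * dist x y := hg.dist_le_mul x y
  have hcontr : ContractingWith ‖S - 1‖₊ T := ⟨hc1, hlipT⟩
  -- equivalence of the equation with x = T x
  have hiff : ∀ x : X, ((Q - 1) (P x) + x = -q ↔ Function.IsFixedPt T x) := by
    intro x
    constructor
    · intro h
      have h' : Q (P x) + (x - P x) = -q := by
        have e : (Q - 1) (P x) = Q (P x) - P x := by
          simp [ContinuousLinearMap.sub_apply]
        rw [e] at h
        rw [← h]; abel
      have h2 := congrArg S h'
      rw [map_add, hSQ', map_neg] at h2
      -- h2 : P x + S (x - P x) = -S q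
      show T x = x
      rw [hT]
      simp only [ContinuousLinearMap.sub_apply, ContinuousLinearMap.one_apply]
      have e : S (x - P x) = (P x + S (x - P x)) - P x := by abel
      rw [show (-S q : X) - (S (x - P x) - (x - P x)) =
          -S q - ((P x + S (x - P x)) - P x - (x - P x)) by rw [← e], h2]
      abel
    · intro h
      have h' : T x = x := h
      rw [hT] at h'
      simp only [ContinuousLinearMap.sub_apply, ContinuousLinearMap.one_apply] at h'
      -- h' : -S q - (S (x - P x) - (x - P x)) = x
      have h2 : P x + S (x - P x) = -S q := by
        have h3 := congrArg (fun z : X => z + (S (x - P x) - (x - P x))) h'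
        simp only [sub_add_cancel] at h3
        -- h3 : -S q = x + (S (x - P x) - (x - P x))
        rw [h3]; abel
      have h4 := congrArg Q h2
      rw [map_add, hQS', map_neg, hQS'] at h4
      -- h4 : Q (P x) + (x - P x) = -q
      have e : (Q - 1) (P x) = Q (P x) - P x := by
        simp [ContinuousLinearMap.sub_apply]
      rw [e, ← h4]; abel
  obtain ⟨x₀, hx₀⟩ : ∃ x, Function.IsFixedPt T x :=
    ⟨hcontr.fixedPoint T, hcontr.fixedPoint_isFixedPt⟩
  exact ⟨x₀, (hiff x₀).mpr hx₀, fun y hy => hcontr.fixedPoint_unique' ((hiff y).mp hy) hx₀⟩
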